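/- A noetherian gcd-monoid M satisfies the right 3-Ore condition if and only if any three right basic elements of M that pairwise admit a common right multiple admit a global common right multiple. -/
import Mathlib


namespace MFR

variable {M : Type*} [Monoid M]

/-- `a` left-divides `b`. -/
def LeftDvd (a b : M) : Prop := ∃ x, a * x = b

/-- `a` right-divides `b`. -/
def RightDvd (a b : M) : Prop := ∃ x, x * a = b

/-- `m` is a right lcm of `a` and `b`. -/
def IsRightLcm (a b m : M) : Prop :=
  LeftDvd a m ∧ LeftDvd b m ∧ ∀ m', LeftDvd a m' → LeftDvd b m' → LeftDvd m m'

/-- `m` is a left lcm of `a` and `b`. -/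
def IsLeftLcm (a b m : M) : Prop :=
  RightDvd a m ∧ RightDvd b m ∧ ∀ m', RightDvd a m' → RightDvd b m' → RightDvd m m'

/-- `d` is a left gcd of `a` and `b`. -/
def IsLeftGcd (a b d : M) : Prop :=
  LeftDvd d a ∧ LeftDvd d b ∧ ∀ e, LeftDvd e a → LeftDvd e b → LeftDvd e d

/-- `d` is a right gcd of `a` and `b`. -/
def IsRightGcd (a b d : M) : Prop :=
  RightDvd d a ∧ RightDvd d b ∧ ∀ e, RightDvd e a → RightDvd e b → RightDvd e d

/-- A gcd-monoid: cancellative, no nontrivial invertible elements,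
left and right gcds exist. -/
structure IsGcdMon (M : Type*) [Monoid M] : Prop where
  mul_left_cancel : ∀ a b c : M, a * b = a * c → b = c
  mul_right_cancel : ∀ a b c : M, b * a = c * a → b = c
  unit_eq_one : ∀ a : M, IsUnit a → a = 1
  exists_leftGcd : ∀ a b : M, ∃ d, IsLeftGcd a b d
  exists_rightGcd : ∀ a b : M, ∃ d, IsRightGcd a b d

/-- Proper left divisibility: `a < b`. -/
def PLDvd (a b : M) : Prop := ∃ x, ¬ IsUnit x ∧ a * x = b

/-- Proper right divisibility. -/
def PRDvd (a b : M) : Prop := ∃ x, ¬ IsUnit x ∧ x * a = b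

/-- Noetherian: proper left and right divisibility are well-founded. -/
def Noeth (M : Type*) [Monoid M] : Prop :=
  WellFounded (PLDvd (M := M)) ∧ WellFounded (PRDvd (M := M))

/-- Proper factor relation. -/
def Factor (a b : M) : Prop := ∃ x y, x * a * y = b ∧ (¬ IsUnit x ∨ ¬ IsUnit y)

/-- Atoms: not a product of two non-invertible elements. -/
def Atomic (a : M) : Prop := ¬ IsUnit a ∧ ∀ x y, a = x * y → IsUnit x ∨ IsUnit y

/-- Existence of a common right multiple. -/
def CommonRightMul (a b : M) : Prop := ∃ m, LeftDvd a m ∧ LeftDvd b m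

/-- Existence of a common left multiple. -/
def CommonLeftMul (a b : M) : Prop := ∃ m, RightDvd a m ∧ RightDvd b m

/-- The 3-Ore condition. -/
def ThreeOre (M : Type*) [Monoid M] : Prop :=
  (∀ a b c : M, CommonRightMul a b → CommonRightMul a c → CommonRightMul b c →
    ∃ m, LeftDvd a m ∧ LeftDvd b m ∧ LeftDvd c m) ∧
  (∀ a b c : M, CommonLeftMul a b → CommonLeftMul a c → CommonLeftMul b c →
    ∃ m, RightDvd a m ∧ RightDvd b m ∧ RightDvd c m)

/-- The product of two multifractions. -/
def fprod : List M → List M → List M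
  | [], b => b
  | a, [] => a
  | a, h :: t =>
    if a.length % 2 = 1 then a.dropLast ++ ((a.getLast?.getD 1) * h) :: t
    else a ++ h :: t

/-- The congruence `≃` on multifractions generated by `(1,∅)`, `(a/a,∅)`, `(1/a/a,∅)`. -/
inductive SimEq : List M → List M → Prop
  | one : SimEq [1] []
  | divPos (a : M) : SimEq [a, a] []
  | divNeg (a : M) : SimEq [1, a, a] []
  | refl (a : List M) : SimEq a a
  | symm {a b} : SimEq a b → SimEq b a
  | trans {a b c} : SimEq a b → SimEq b c → SimEq a c
  | mul {a b c d} : SimEq a b → SimEq c d → SimEq (fprod a c) (fprod b d)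

/-- The reduction rule `R_{i,x}` on multifractions (entries indexed from 1):
`Reduce i x a b` means `b = a • R_{i,x}`. -/
def Reduce (i : ℕ) (x : M) (a b : List M) : Prop :=
  (i = 1 ∧ ∃ (a₁ a₂ b₁ b₂ : M) (s : List M),
    a = a₁ :: a₂ :: s ∧ b = b₁ :: b₂ :: s ∧ b₁ * x = a₁ ∧ b₂ * x = a₂) ∨
  (2 ≤ i ∧ i % 2 = 0 ∧ ∃ (p s : List M) (am ai ap bi bp x' : M),
    p.length = i - 2 ∧
    a = p ++ am :: ai :: ap :: s ∧
    b = p ++ (am * x') :: bi :: bp :: s ∧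
    IsRightLcm x ai (x * bi) ∧ x * bi = ai * x' ∧ x * bp = ap) ∨
  (3 ≤ i ∧ i % 2 = 1 ∧ ∃ (p s : List M) (am ai ap bi bp x' : M),
    p.length = i - 2 ∧
    a = p ++ am :: ai :: ap :: s ∧
    b = p ++ (x' * am) :: bi :: bp :: s ∧
    IsLeftLcm x ai (bi * x) ∧ bi * x = x' * ai ∧ bp * x = ap)

/-- One-step reduction. -/
def Red (a b : List M) : Prop := ∃ i x, x ≠ (1 : M) ∧ Reduce i x a b

/-- Reflexive-transitive closure of one-step reduction. -/
def RedStar : List M → List M → Prop := Relation.ReflTransGen Red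

/-- Irreducible multifractions. -/
def RIrred (a : List M) : Prop := ∀ b, ¬ Red a b

/-- Right basic elements: closure of the atoms under right complement. -/
inductive RightBasic : M → Prop
  | atom {a : M} : Atomic a → RightBasic a
  | compl {a b a' : M} : RightBasic a → RightBasic b →
      IsRightLcm a b (b * a') → RightBasic a'

/-- Minimal number of atoms needed to express `a`. -/
noncomputable def atomLen (a : M) : ℕ :=
  sInf {n | ∃ l : List M, (∀ x ∈ l, Atomic x) ∧ l.length = n ∧ l.prod = a}


/- ---------------- Auxiliary lemmas ---------------- -/

theorem ld_refl (a : M) : LeftDvd a a := ⟨1, mul_one a⟩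

theorem ld_trans {a b c : M} (h1 : LeftDvd a b) (h2 : LeftDvd b c) : LeftDvd a c := by
  obtain ⟨x, hx⟩ := h1; obtain ⟨y, hy⟩ := h2
  exact ⟨x * y, by rw [← mul_assoc, hx, hy]⟩

theorem ld_mul_left (c : M) {a b : M} (h1 : LeftDvd a b) : LeftDvd (c * a) (c * b) := by
  obtain ⟨x, hx⟩ := h1; exact ⟨x, by rw [mul_assoc, hx]⟩

theorem ld_antisymm (h : IsGcdMon M) {a b : M} (h1 : LeftDvd a b) (h2 : LeftDvd b a) :
    a = b := by
  obtain ⟨x, hx⟩ := h1; obtain ⟨y, hy⟩ := h2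
  have hxy : x * y = 1 := h.mul_left_cancel a _ _ (by rw [← mul_assoc, hx, hy, mul_one])
  have hyx : y * x = 1 := h.mul_left_cancel b _ _ (by rw [← mul_assoc, hy, hx, mul_one])
  have hu : IsUnit x := ⟨⟨x, y, hxy, hyx⟩, rfl⟩
  rw [h.unit_eq_one x hu, mul_one] at hx; exact hx

theorem crm_symm {a b : M} (h1 : CommonRightMul a b) : CommonRightMul b a := by
  obtain ⟨m, h1, h2⟩ := h1; exact ⟨m, h2, h1⟩

theorem exists_rightLcm (h : IsGcdMon M) (hn : Noeth M) {a b : M}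
    (hc : CommonRightMul a b) : ∃ m, IsRightLcm a b m := by
  obtain ⟨m, hma, hmb⟩ := hc
  obtain ⟨m₀, hm₀, hmin⟩ := hn.1.has_min {m | LeftDvd a m ∧ LeftDvd b m} ⟨m, hma, hmb⟩
  refine ⟨m₀, hm₀.1, hm₀.2, fun m' hm'a hm'b => ?_⟩
  obtain ⟨d, hd₀, hd', hdmax⟩ := h.exists_leftGcd m₀ m'
  have hdS : LeftDvd a d ∧ LeftDvd b d := ⟨hdmax a hm₀.1 hm'a, hdmax b hm₀.2 hm'b⟩
  obtain ⟨x, hx⟩ := hd₀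
  have hxu : IsUnit x := by
    by_contra hxu
    exact hmin d hdS ⟨x, hxu, hx⟩
  rw [h.unit_eq_one x hxu, mul_one] at hx
  exact hx ▸ hd'

theorem rlcm_symm {a b m : M} (h1 : IsRightLcm a b m) : IsRightLcm b a m :=
  ⟨h1.2.1, h1.1, fun m' h2 h3 => h1.2.2 m' h3 h2⟩

/-- Iterated lcm law. -/
theorem lcm_mul (h : IsGcdMon M) {x u v β m₁ m₂ : M}
    (h1 : IsRightLcm x u m₁) (hβ : u * β = m₁)
    (h2 : IsRightLcm β v m₂) : IsRightLcm x (u * v) (u * m₂) := by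
  obtain ⟨γ, hγ⟩ := h2.1
  refine ⟨?_, ?_, ?_⟩
  · exact ld_trans h1.1 ⟨γ, by rw [← hβ, mul_assoc, hγ]⟩
  · obtain ⟨δ, hδ⟩ := h2.2.1
    exact ⟨δ, by rw [mul_assoc, hδ]⟩
  · rintro w hxw ⟨t, ht⟩
    have huw : LeftDvd u w := ⟨v * t, by rw [← mul_assoc, ht]⟩
    obtain ⟨r, hr⟩ := h1.2.2 w hxw huw
    have hcan : β * r = v * t := by
      apply h.mul_left_cancel u
      rw [← mul_assoc, ← mul_assoc, hβ, hr, ht]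
    obtain ⟨s, hs⟩ := h2.2.2 (β * r) ⟨r, rfl⟩ ⟨t, hcan.symm⟩
    exact ⟨s, by rw [mul_assoc, hs, ← mul_assoc, hβ, hr]⟩

/-- RC-closedness: the complement of a product of basic elements past a basic
element is a product of at most as many basic elements. -/
theorem compl_basic_list (h : IsGcdMon M) (hn : Noeth M) :
    ∀ l : List M, (∀ y ∈ l, RightBasic y) →
    ∀ x m : M, RightBasic x → IsRightLcm x l.prod m →
    ∃ l' : List M, (∀ y ∈ l', RightBasic y) ∧ l'.length ≤ l.length ∧ x * l'.prod = m := by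
  intro l
  induction l with
  | nil =>
    intro _ x m hx hlcm
    have hmx : m = x :=
      ld_antisymm h (hlcm.2.2 x (ld_refl x) ⟨x, one_mul x⟩) hlcm.1
    exact ⟨[], by simp, le_refl _, by rw [List.prod_nil, mul_one, hmx]⟩
  | cons u t IH =>
    intro hbl x m hx hlcm
    have hub : RightBasic u := hbl u (by simp)
    have htb : ∀ y ∈ t, RightBasic y := fun y hy => hbl y (by simp [hy])
    have hprod : (u :: t).prod = u * t.prod := List.prod_cons
    rw [hprod] at hlcm
    have hum : LeftDvd u m := ld_trans ⟨t.prod, rfl⟩ hlcm.2.1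
    -- lcm of x and u
    obtain ⟨m₁, hL1⟩ := exists_rightLcm h hn (a := x) (b := u) ⟨m, hlcm.1, hum⟩
    obtain ⟨β, hβ⟩ := hL1.2.1
    have hβb : RightBasic β := RightBasic.compl hx hub (hβ ▸ hL1)
    obtain ⟨α, hα⟩ := hL1.1
    have hαb : RightBasic α := RightBasic.compl hub hx (hα ▸ rlcm_symm hL1)
    -- m₁ divides m
    obtain ⟨r, hr⟩ := hL1.2.2 m hlcm.1 hum
    obtain ⟨q, hq⟩ := hlcm.2.1
    have hcan : β * r = t.prod * q := by
      apply h.mul_left_cancel u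
      rw [← mul_assoc, ← mul_assoc, hβ, hr, ← hq, mul_assoc]
    -- lcm of β and t.prod
    obtain ⟨m₂, hL2⟩ := exists_rightLcm h hn (a := β) (b := t.prod)
      ⟨β * r, ⟨r, rfl⟩, ⟨q, hcan.symm⟩⟩
    obtain ⟨l'', hl''b, hl''len, hl''⟩ := IH htb β m₂ hβb hL2
    have hlcm' : IsRightLcm x (u * t.prod) (u * m₂) := lcm_mul h hL1 hβ hL2
    have hmeq : m = u * m₂ :=
      ld_antisymm h (hlcm.2.2 (u * m₂) hlcm'.1 hlcm'.2.1)
        (hlcm'.2.2 m hlcm.1 hlcm.2.1)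
    refine ⟨α :: l'', ?_, by simpa using Nat.succ_le_succ hl''len, ?_⟩
    · intro y hy
      rcases List.mem_cons.mp hy with rfl | hy
      · exact hαb
      · exact hl''b y hy
    · rw [List.prod_cons, ← mul_assoc, hα, hmeq, ← hl'', ← mul_assoc, hβ]

/-- Every element is a product of atoms. -/
theorem exists_atom_fact (h : IsGcdMon M) (hn : Noeth M) (a : M) :
    ∃ l : List M, (∀ x ∈ l, Atomic x) ∧ l.prod = a := by
  refine hn.2.induction (C := fun a => ∃ l : List M, (∀ x ∈ l, Atomic x) ∧ l.prod = a) a ?_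
  intro a IH
  by_cases ha : IsUnit a
  · exact ⟨[], by simp, by simpa using (h.unit_eq_one a ha).symm⟩
  · obtain ⟨x₀, ⟨hx₀u, a₂, ha₂⟩, hmin⟩ :=
      hn.1.has_min {x | ¬ IsUnit x ∧ LeftDvd x a} ⟨a, ha, ld_refl a⟩
    have hatom : Atomic x₀ := by
      refine ⟨hx₀u, fun u v huv => ?_⟩
      by_contra hc
      push_neg at hc
      exact hmin u ⟨hc.1, ⟨v * a₂, by rw [← mul_assoc, ← huv, ha₂]⟩⟩ ⟨v, hc.2, huv.symm⟩
    obtain ⟨l₂, hl₂, hp₂⟩ := IH a₂ ⟨x₀, hx₀u, ha₂⟩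
    refine ⟨x₀ :: l₂, ?_, by rw [List.prod_cons, hp₂, ha₂]⟩
    intro y hy
    rcases List.mem_cons.mp hy with rfl | hy
    · exact hatom
    · exact hl₂ y hy

/-- Splitting step of the main induction. -/
theorem split_step (h : IsGcdMon M) (hn : Noeth M) {n : ℕ}
    (IH : ∀ la lb lc : List M, (∀ x ∈ la, RightBasic x) → (∀ x ∈ lb, RightBasic x) →
      (∀ x ∈ lc, RightBasic x) → la.length + lb.length + lc.length ≤ n →
      CommonRightMul la.prod lb.prod → CommonRightMul la.prod lc.prod →
      CommonRightMul lb.prod lc.prod →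
      ∃ m, LeftDvd la.prod m ∧ LeftDvd lb.prod m ∧ LeftDvd lc.prod m)
    (x : M) (t lb lc : List M) (hx : RightBasic x) (ht : ∀ y ∈ t, RightBasic y)
    (hlb : ∀ y ∈ lb, RightBasic y) (hlc : ∀ y ∈ lc, RightBasic y)
    (hlen : (x :: t).length + lb.length + lc.length ≤ n + 1) (ht0 : t ≠ [])
    (hab : CommonRightMul (x :: t).prod lb.prod)
    (hac : CommonRightMul (x :: t).prod lc.prod)
    (hbc : CommonRightMul lb.prod lc.prod) :
    ∃ m, LeftDvd (x :: t).prod m ∧ LeftDvd lb.prod m ∧ LeftDvd lc.prod m := by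
  have hprod : (x :: t).prod = x * t.prod := List.prod_cons
  have hxa : LeftDvd x (x :: t).prod := ⟨t.prod, hprod.symm⟩
  have ht1 : 1 ≤ t.length := List.length_pos_iff.mpr ht0
  -- step 1: crm of x with b and c
  obtain ⟨p, hpa, hpb⟩ := hab
  obtain ⟨p', hp'a, hp'c⟩ := hac
  have hxb : CommonRightMul x lb.prod := ⟨p, ld_trans hxa hpa, hpb⟩
  have hxc : CommonRightMul x lc.prod := ⟨p', ld_trans hxa hp'a, hp'c⟩
  -- step 2: common multiple of x, b, c (by IH on ([x], lb, lc))
  obtain ⟨m₀, hm₀x, hm₀b, hm₀c⟩ := by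
    have := IH [x] lb lc (by simpa using hx) hlb hlc
      (by simp at hlen ⊢; omega)
      (by simpa using hxb) (by simpa using hxc) hbc
    simpa using this
  -- step 3: lcms of x with b and c, and their basic decompositions
  obtain ⟨m₁, hL1⟩ := exists_rightLcm h hn hxb
  obtain ⟨m₂, hL2⟩ := exists_rightLcm h hn hxc
  obtain ⟨lb', hlb'b, hlb'len, hlb'⟩ := compl_basic_list h hn lb hlb x m₁ hx hL1
  obtain ⟨lc', hlc'b, hlc'len, hlc'⟩ := compl_basic_list h hn lc hlc x m₂ hx hL2
  -- step 4: crm of t.prod with lb'.prod and lc'.prod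
  have hstep4 : ∀ (bb mz pz cc : M), IsRightLcm x bb mz →
      x * cc = mz → LeftDvd (x :: t).prod pz → LeftDvd bb pz →
      CommonRightMul t.prod cc := by
    intro bb mz pz cc hLz hlz hpza hpzz
    obtain ⟨r, hr⟩ := hLz.2.2 pz (ld_trans hxa hpza) hpzz
    obtain ⟨q, hq⟩ := hpza
    have hcan : cc * r = t.prod * q := by
      apply h.mul_left_cancel x
      rw [← mul_assoc, ← mul_assoc, hlz, hr, ← hq, hprod, mul_assoc]
    exact ⟨t.prod * q, ⟨q, rfl⟩, ⟨r, hcan⟩⟩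
  have htb' : CommonRightMul t.prod lb'.prod := hstep4 _ m₁ p _ hL1 hlb' hpa hpb
  have htc' : CommonRightMul t.prod lc'.prod := hstep4 _ m₂ p' _ hL2 hlc' hp'a hp'c
  -- step 5: crm of lb'.prod and lc'.prod via m₀
  obtain ⟨s, hs⟩ := hL1.2.2 m₀ hm₀x hm₀b
  obtain ⟨s', hs'⟩ := hL2.2.2 m₀ hm₀x hm₀c
  have hcan : lb'.prod * s = lc'.prod * s' := by
    apply h.mul_left_cancel x
    rw [← mul_assoc, ← mul_assoc, hlb', hlc', hs, hs']
  have hbc' : CommonRightMul lb'.prod lc'.prod := ⟨lb'.prod * s, ⟨s, rfl⟩, ⟨s', hcan.symm⟩⟩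
  -- step 6: IH on (t, lb', lc')
  obtain ⟨w, hwt, hwb, hwc⟩ := IH t lb' lc' ht hlb'b hlc'b
    (by simp at hlen; omega) htb' htc' hbc'
  -- step 7: conclude with x * w
  refine ⟨x * w, ?_, ?_, ?_⟩
  · rw [hprod]; exact ld_mul_left x hwt
  · exact ld_trans hL1.2.1 (hlb' ▸ ld_mul_left x hwb)
  · exact ld_trans hL2.2.1 (hlc' ▸ ld_mul_left x hwc)

/-- The main induction: 3-Ore for products of right basic elements. -/
theorem main_ind (h : IsGcdMon M) (hn : Noeth M)
    (H : ∀ a b c : M, RightBasic a → RightBasic b → RightBasic c →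
      CommonRightMul a b → CommonRightMul a c → CommonRightMul b c →
      ∃ m, LeftDvd a m ∧ LeftDvd b m ∧ LeftDvd c m) :
    ∀ (n : ℕ) (la lb lc : List M), (∀ x ∈ la, RightBasic x) → (∀ x ∈ lb, RightBasic x) →
      (∀ x ∈ lc, RightBasic x) → la.length + lb.length + lc.length ≤ n →
      CommonRightMul la.prod lb.prod → CommonRightMul la.prod lc.prod →
      CommonRightMul lb.prod lc.prod →
      ∃ m, LeftDvd la.prod m ∧ LeftDvd lb.prod m ∧ LeftDvd lc.prod m := by
  intro n
  induction n with
  | zero =>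
    intro la lb lc _ _ _ hlen _ _ _
    have : la = [] ∧ lb = [] ∧ lc = [] := by
      refine ⟨?_, ?_, ?_⟩ <;> (rw [← List.length_eq_zero_iff]; omega)
    obtain ⟨h1, h2, h3⟩ := this
    subst h1; subst h2; subst h3
    exact ⟨1, ld_refl 1, ld_refl 1, ld_refl 1⟩
  | succ n IHn =>
    intro la lb lc hla hlb hlc hlen hab hac hbc
    match la, hla, hlen, hab, hac with
    | [], _, _, _, _ =>
      obtain ⟨m, hmb, hmc⟩ := hbc
      exact ⟨m, by simpa using ⟨m, one_mul m⟩, hmb, hmc⟩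
    | x :: (t₁ :: t₂), hla, hlen, hab, hac =>
      exact split_step h hn IHn x (t₁ :: t₂) lb lc (hla x (by simp))
        (fun y hy => hla y (by simp [hy])) hlb hlc hlen (by simp) hab hac hbc
    | [x], hla, hlen, hab, hac =>
      match lb, hlb, hlen, hab, hbc with
      | [], _, _, _, _ =>
        obtain ⟨m, hma, hmc⟩ := hac
        exact ⟨m, hma, by simpa using ⟨m, one_mul m⟩, hmc⟩
      | y :: (s₁ :: s₂), hlb, hlen, hab, hbc =>
        obtain ⟨m, hm1, hm2, hm3⟩ := split_step h hn IHn y (s₁ :: s₂) [x] lc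
          (hlb y (by simp)) (fun z hz => hlb z (by simp [hz])) hla hlc
          (by simp at hlen ⊢; omega) (by simp) (crm_symm hab) hbc
          hac
        exact ⟨m, hm2, hm1, hm3⟩
      | [y], hlb, hlen, hab, hbc =>
        match lc, hlc, hlen, hac, hbc with
        | [], _, _, _, _ =>
          obtain ⟨m, hma, hmb⟩ := hab
          exact ⟨m, hma, hmb, by simpa using ⟨m, one_mul m⟩⟩
        | z :: (r₁ :: r₂), hlc, hlen, hac, hbc =>
          obtain ⟨m, hm1, hm2, hm3⟩ := split_step h hn IHn z (r₁ :: r₂) [x] [y]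
            (hlc z (by simp)) (fun w hw => hlc w (by simp [hw])) hla hlb
            (by simp at hlen ⊢; omega) (by simp) (crm_symm hac) (crm_symm hbc)
            hab
          exact ⟨m, hm2, hm3, hm1⟩
        | [z], hlc, hlen, hac, hbc =>
          have := H x y z (hla x (by simp)) (hlb y (by simp)) (hlc z (by simp))
            (by simpa using hab) (by simpa using hac) (by simpa using hbc)
          simpa using this

/-- a noetherian gcd-monoid satisfies the right 3-Ore condition
iff any three right basic elements pairwise admitting common right multiples
admit a global common right multiple. -/
theorem stmt_16 {M : Type*} [Monoid M] (h : IsGcdMon M) (hn : Noeth M) :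
    (∀ a b c : M, CommonRightMul a b → CommonRightMul a c → CommonRightMul b c →
      ∃ m, LeftDvd a m ∧ LeftDvd b m ∧ LeftDvd c m) ↔
    (∀ a b c : M, RightBasic a → RightBasic b → RightBasic c →
      CommonRightMul a b → CommonRightMul a c → CommonRightMul b c →
      ∃ m, LeftDvd a m ∧ LeftDvd b m ∧ LeftDvd c m) := by
  constructor
  · intro H3 a b c _ _ _ hab hac hbc
    exact H3 a b c hab hac hbc
  · intro H a b c hab hac hbc
    obtain ⟨la, hla, hpa⟩ := exists_atom_fact h hn a
    obtain ⟨lb, hlb, hpb⟩ := exists_atom_fact h hn b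
    obtain ⟨lc, hlc, hpc⟩ := exists_atom_fact h hn c
    have hba : ∀ l : List M, (∀ x ∈ l, Atomic x) → ∀ x ∈ l, RightBasic x :=
      fun l hl x hx => RightBasic.atom (hl x hx)
    subst hpa; subst hpb; subst hpc
    exact main_ind h hn H (la.length + lb.length + lc.length) la lb lc
      (hba la hla) (hba lb hlb) (hba lc hlc) (le_refl _) hab hac hbc

end MFR
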